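/- Let G be a group acting on a Z_p-module M via φ: G → Aut(M), with the action of length d < p (i.e. [M, _d G] = 0). Suppose additionally the group operation and truncated log are compatible so that log(φ): G → End(M), g ↦ Σ_{k=1}^{p-1} (-1)^{k+1}(φ(g)-id)^k/k is defined. Then for every G-invariant submodule U of M, one has log(φ)(g)(U) ⊆ [U, G] for all g ∈ G. Consequently [M, _i log(G)] ⊆ [M, _i G] for all i ≥ 1, where [M, log(G)] = Span{log(φ)(g)(m)}. -/

import Mathlib

/-- Truncated exponential `∑_{k<p} f^k/k!` of an endomorphism of a `ℤ_[p]`-module. -/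
noncomputable def texp (p : ℕ) [Fact p.Prime] {M : Type*} [AddCommGroup M] [Module ℤ_[p] M]
    (f : Module.End ℤ_[p] M) : Module.End ℤ_[p] M :=
  ∑ k ∈ Finset.range p, Ring.inverse ((k.factorial : ℤ_[p])) • f ^ k

/-- Truncated logarithm `∑_{1≤k≤p-1} (-1)^{k+1}(g-1)^k/k`. -/
noncomputable def tlog (p : ℕ) [Fact p.Prime] {M : Type*} [AddCommGroup M] [Module ℤ_[p] M]
    (g : Module.End ℤ_[p] M) : Module.End ℤ_[p] M :=
  ∑ k ∈ Finset.Icc 1 (p - 1), ((-1 : ℤ_[p]) ^ (k + 1) * Ring.inverse ((k : ℤ_[p]))) • (g - 1) ^ k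


/-- `[U, G] = Span{m - g·m : m ∈ U, g ∈ G}`. -/
noncomputable def grBr (p : ℕ) [Fact p.Prime] {M G : Type*} [AddCommGroup M] [Module ℤ_[p] M] [Group G]
    (φ : G →* (M ≃ₗ[ℤ_[p]] M)) (U : Submodule ℤ_[p] M) : Submodule ℤ_[p] M :=
  Submodule.span ℤ_[p] {x | ∃ g : G, ∃ m ∈ U, x = m - φ g m}

/-- Iterated `[M, _i G]`, with `[M, _0 G] = M`. -/
noncomputable def grIter (p : ℕ) [Fact p.Prime] {M G : Type*} [AddCommGroup M] [Module ℤ_[p] M] [Group G]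
    (φ : G →* (M ≃ₗ[ℤ_[p]] M)) : ℕ → Submodule ℤ_[p] M
  | 0 => ⊤
  | (i+1) => grBr p φ (grIter p φ i)


/-- `[U, log(G)] = Span{log(φ(g))·m : m ∈ U, g ∈ G}`. -/
noncomputable def logBr (p : ℕ) [Fact p.Prime] {M G : Type*} [AddCommGroup M] [Module ℤ_[p] M]
    [Group G] (φ : G →* (M ≃ₗ[ℤ_[p]] M)) (U : Submodule ℤ_[p] M) : Submodule ℤ_[p] M :=
  Submodule.span ℤ_[p] {x | ∃ g : G, ∃ m ∈ U, x = tlog p (φ g).toLinearMap m}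

/-- Iterated `[M, _i log(G)]`. -/
noncomputable def logIter (p : ℕ) [Fact p.Prime] {M G : Type*} [AddCommGroup M] [Module ℤ_[p] M]
    [Group G] (φ : G →* (M ≃ₗ[ℤ_[p]] M)) : ℕ → Submodule ℤ_[p] M
  | 0 => ⊤
  | (i+1) => logBr p φ (logIter p φ i)

/-- For a group action of length `d < p`: `log(φ)(g)(U) ⊆ [U, G]` for every invariant
submodule `U`, and consequently `[M, _i log(G)] ⊆ [M, _i G]` for all `i ≥ 1`. -/
theorem stmt6 {p : ℕ} [Fact p.Prime] {M G : Type*} [AddCommGroup M] [Module ℤ_[p] M] [Group G]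
    (φ : G →* (M ≃ₗ[ℤ_[p]] M)) (d : ℕ) (hd : d < p) (h : grIter p φ d = ⊥) :
    (∀ U : Submodule ℤ_[p] M, (∀ g : G, ∀ m ∈ U, φ g m ∈ U) →
      ∀ g : G, ∀ m ∈ U, tlog p (φ g).toLinearMap m ∈ grBr p φ U) ∧
    (∀ i : ℕ, 1 ≤ i → logIter p φ i ≤ grIter p φ i) := by
  -- grBr is always invariant
  have grBr_inv : ∀ (U : Submodule ℤ_[p] M) (g : G), ∀ m ∈ grBr p φ U,
      φ g m ∈ grBr p φ U := by
    intro U g m hm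
    have hle : Submodule.map ((φ g : M ≃ₗ[ℤ_[p]] M) : M →ₗ[ℤ_[p]] M) (grBr p φ U)
        ≤ grBr p φ U := by
      rw [grBr, Submodule.map_span, Submodule.span_le]
      rintro x ⟨y, ⟨k, m', hm', rfl⟩, rfl⟩
      have h1 : (m' : M) - φ g m' ∈ grBr p φ U :=
        Submodule.subset_span ⟨g, m', hm', rfl⟩
      have h2 : (m' : M) - φ (g * k) m' ∈ grBr p φ U :=
        Submodule.subset_span ⟨g * k, m', hm', rfl⟩
      have key : ((φ g : M ≃ₗ[ℤ_[p]] M) : M →ₗ[ℤ_[p]] M) (m' - φ k m')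
          = -(m' - φ g m') + (m' - φ (g * k) m') := by
        have : φ (g * k) m' = φ g (φ k m') := by rw [map_mul]; rfl
        simp [this]
      rw [key]
      exact add_mem (neg_mem h1) h2
    exact hle ⟨m, hm, rfl⟩
  -- key lemma: (g-1)^k maps invariant U into [U, G] for k ≥ 1
  have key : ∀ (U : Submodule ℤ_[p] M), (∀ g : G, ∀ m ∈ U, φ g m ∈ U) →
      ∀ (g : G) (k : ℕ), 1 ≤ k → ∀ m ∈ U,
      ((((φ g).toLinearMap - 1 : Module.End ℤ_[p] M)) ^ k) m ∈ grBr p φ U := by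
    intro U hU g k hk
    induction k, hk using Nat.le_induction with
    | base =>
      intro m hm
      have : ((((φ g).toLinearMap - 1 : Module.End ℤ_[p] M)) ^ 1) m
          = -(m - φ g m) := by
        rw [pow_one]
        simp [LinearMap.sub_apply]
      rw [this]
      exact neg_mem (Submodule.subset_span ⟨g, m, hm, rfl⟩)
    | succ k hk ih =>
      intro m hm
      have hm' : (((φ g).toLinearMap - 1 : Module.End ℤ_[p] M)) m ∈ U := by
        have : (((φ g).toLinearMap - 1 : Module.End ℤ_[p] M)) m = φ g m - m := by
          simp [LinearMap.sub_apply]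
        rw [this]; exact sub_mem (hU g m hm) hm
      have := ih _ hm'
      rw [pow_succ]
      simpa [Module.End.mul_apply] using this
  have part1 : ∀ U : Submodule ℤ_[p] M, (∀ g : G, ∀ m ∈ U, φ g m ∈ U) →
      ∀ g : G, ∀ m ∈ U, tlog p (φ g).toLinearMap m ∈ grBr p φ U := by
    intro U hU g m hm
    rw [tlog, LinearMap.sum_apply]
    refine Submodule.sum_mem _ fun k hk => ?_
    rw [LinearMap.smul_apply]
    exact Submodule.smul_mem _ _ (key U hU g k (Finset.mem_Icc.mp hk).1 m hm)
  refine ⟨part1, ?_⟩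
  -- grIter is invariant
  have grIter_inv : ∀ i : ℕ, ∀ g : G, ∀ m ∈ grIter p φ i, φ g m ∈ grIter p φ i := by
    intro i
    cases i with
    | zero => intro g m _; trivial
    | succ i => exact fun g => grBr_inv (grIter p φ i) g
  have main : ∀ i : ℕ, logIter p φ i ≤ grIter p φ i := by
    intro i
    induction i with
    | zero => exact le_refl _
    | succ i ih =>
      show logBr p φ (logIter p φ i) ≤ grBr p φ (grIter p φ i)
      rw [logBr, Submodule.span_le]
      rintro x ⟨g, m, hm, rfl⟩
      exact part1 (grIter p φ i) (grIter_inv i) g m (ih hm)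
  exact fun i _ => main i
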